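/- Let α, β₁, β₂, γ₁, γ₂, z₁, z₂ be complex numbers with Re γ₁ > Re β₁ > 0, Re γ₂ > Re β₂ > 0 and |z₁| + |z₂| < 1. Then F₂(α; β₁, β₂; γ₁, γ₂; z₁, z₂) = Γ(γ₁)Γ(γ₂) / (Γ(β₁)Γ(β₂)Γ(γ₁−β₁)Γ(γ₂−β₂)) · ∫₀¹ ∫₀¹ u^{β₂−1} (1−u)^{γ₂−β₂−1} x^{β₁−1} (1−x)^{γ₁−β₁−1} (1 − z₁x − z₂u)^{−α} dx du, where all complex powers are principal branch powers (well defined since Re(1 − z₁x − z₂u) > 0 for x, u ∈ [0,1]). -/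

import Mathlib

open Complex MeasureTheory

/-- Pochhammer symbol `(x)_n` in `ℂ`. -/
noncomputable def cpoch (x : ℂ) (n : ℕ) : ℂ := (ascPochhammer ℂ n).eval x

/-- Appell's hypergeometric series `F₂`. -/
noncomputable def appellF2 (a b₁ b₂ c₁ c₂ z₁ z₂ : ℂ) : ℂ :=
  ∑' p : ℕ × ℕ, cpoch a (p.1 + p.2) * cpoch b₁ p.1 * cpoch b₂ p.2 /
    (cpoch c₁ p.1 * cpoch c₂ p.2 * (p.1.factorial : ℂ) * (p.2.factorial : ℂ)) *
    z₁ ^ p.1 * z₂ ^ p.2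

open Finset Set

lemma cpoch_zero (x : ℂ) : cpoch x 0 = 1 := by simp [cpoch]

lemma cpoch_succ (x : ℂ) (n : ℕ) : cpoch x (n + 1) = cpoch x n * (x + n) := by
  simp [cpoch, ascPochhammer_succ_eval]

lemma norm_cpoch_le (x : ℂ) (n : ℕ) :
    ‖cpoch x n‖ ≤ (ascPochhammer ℝ n).eval (‖x‖ + 1) := by
  induction n with
  | zero => simp [cpoch]
  | succ n ih =>
      rw [cpoch_succ, ascPochhammer_succ_eval]
      have h1 : (0:ℝ) ≤ (ascPochhammer ℝ n).eval (‖x‖ + 1) :=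
        le_of_lt (ascPochhammer_pos n _ (by positivity))
      have h2 : ‖x + (n:ℂ)‖ ≤ ‖x‖ + 1 + n := by
        calc ‖x + (n:ℂ)‖ ≤ ‖x‖ + ‖(n:ℂ)‖ := norm_add_le _ _
        _ ≤ ‖x‖ + 1 + n := by simp
      calc ‖cpoch x n * (x + n)‖ = ‖cpoch x n‖ * ‖x + (n:ℂ)‖ := norm_mul _ _
      _ ≤ (ascPochhammer ℝ n).eval (‖x‖ + 1) * (‖x‖ + 1 + n) := by
          apply mul_le_mul ih h2 (norm_nonneg _) h1

/-- ratio-test summability for `P(M, k+j) / k! * t^k`. -/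
lemma summable_poch_aux (M : ℝ) (hM : 0 < M) (j : ℕ) {t : ℝ} (ht0 : 0 ≤ t) (ht : t < 1) :
    Summable (fun k : ℕ => (ascPochhammer ℝ (k + j)).eval M / (k.factorial : ℝ) * t ^ k) := by
  set f : ℕ → ℝ := fun k => (ascPochhammer ℝ (k + j)).eval M / (k.factorial : ℝ) * t ^ k with hf
  have hpos : ∀ k, 0 ≤ f k := by
    intro k
    have := ascPochhammer_pos (k + j) M hM
    positivity
  set r : ℝ := (t + 1) / 2 with hr
  have hr1 : r < 1 := by rw [hr]; linarith
  have htr : t < r := by rw [hr]; linarith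
  apply summable_of_ratio_norm_eventually_le hr1
  have htend : Filter.Tendsto (fun k : ℕ => (M + (k + j)) / (k + 1) * t) Filter.atTop
      (nhds t) := by
    have h1 : Filter.Tendsto (fun k : ℕ => (M + (k + j)) / (k + 1)) Filter.atTop (nhds 1) := by
      have : (fun k : ℕ => (M + (k + j)) / (k + 1)) =
          fun k : ℕ => ((M + j - 1) / (k + 1) + 1) := by
        funext k
        have : ((k:ℝ) + 1) ≠ 0 := by positivity
        field_simp
        ring
      rw [this]
      have := (tendsto_one_div_add_atTop_nhds_zero_nat).const_mul (M + j - 1)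
      simpa [div_eq_mul_inv] using this.add_const 1
    simpa using h1.mul_const t
  have hev : ∀ᶠ k : ℕ in Filter.atTop, (M + (k + j)) / (k + 1) * t ≤ r :=
    Filter.Tendsto.eventually_le_const htr htend
  filter_upwards [hev] with k hk
  have hfact : (k.factorial : ℝ) > 0 := by positivity
  have hrec : f (k + 1) = f k * ((M + (k + j)) / (k + 1) * t) := by
    rw [hf]
    simp only
    rw [show k + 1 + j = (k + j) + 1 by ring, ascPochhammer_succ_eval,
      Nat.factorial_succ, pow_succ]
    push_cast
    field_simp
  rw [Real.norm_eq_abs, Real.norm_eq_abs, _root_.abs_of_nonneg (hpos _), _root_.abs_of_nonneg (hpos _), hrec]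
  have h0 : 0 ≤ (M + (k + j)) / (k + 1) * t := by positivity
  calc f k * ((M + (k + j)) / (k + 1) * t) ≤ f k * r := by
        apply mul_le_mul_of_nonneg_left hk (hpos k)
  _ = r * f k := mul_comm _ _

lemma sum_antidiagonal_pow {K : Type*} [Field K] [CharZero K] (a b : K) (k : ℕ) :
    ∑ p ∈ Finset.HasAntidiagonal.antidiagonal k, a ^ p.1 * b ^ p.2 / (p.1.factorial * p.2.factorial : K)
      = (a + b) ^ k / (k.factorial : K) := by
  rw [Finset.Nat.sum_antidiagonal_eq_sum_range_succ_mk, add_pow]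
  rw [Finset.sum_div]
  apply Finset.sum_congr rfl
  intro i hi
  have hik : i ≤ k := Nat.lt_succ_iff.mp (Finset.mem_range.mp hi)
  rw [Nat.cast_choose K hik]
  have h1 : (i.factorial : K) ≠ 0 := by exact_mod_cast i.factorial_ne_zero
  have h2 : ((k - i).factorial : K) ≠ 0 := by exact_mod_cast (k - i).factorial_ne_zero
  have h3 : (k.factorial : K) ≠ 0 := by exact_mod_cast k.factorial_ne_zero
  field_simp


lemma summable_double_norm (α : ℂ) {r s : ℝ} (hr : 0 ≤ r) (hs : 0 ≤ s) (h : r + s < 1) :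
    Summable (fun p : ℕ × ℕ =>
      ‖cpoch α (p.1 + p.2)‖ / (p.1.factorial * p.2.factorial) * r ^ p.1 * s ^ p.2) := by
  set f : ℕ × ℕ → ℝ := fun p =>
      ‖cpoch α (p.1 + p.2)‖ / (p.1.factorial * p.2.factorial) * r ^ p.1 * s ^ p.2 with hfdef
  have hnn : ∀ p : ℕ × ℕ, 0 ≤ f p := fun p => by
    have : (0:ℝ) ≤ ‖cpoch α (p.1 + p.2)‖ := norm_nonneg _
    positivity
  rw [← Finset.HasAntidiagonal.sigmaAntidiagonalEquivProd.summable_iff]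
  apply (summable_sigma_of_nonneg (fun x => hnn _)).mpr
  refine ⟨fun k => Summable.of_finite, ?_⟩
  · have hval : ∀ k : ℕ, ∑' (p : {p : ℕ × ℕ // p ∈ Finset.HasAntidiagonal.antidiagonal k}),
        f (Finset.HasAntidiagonal.sigmaAntidiagonalEquivProd ⟨k, p⟩)
        = ‖cpoch α k‖ * ((r + s) ^ k / k.factorial) := by
      intro k
      rw [tsum_fintype]
      rw [show (∑ p : {p : ℕ × ℕ // p ∈ Finset.HasAntidiagonal.antidiagonal k},
          f (Finset.HasAntidiagonal.sigmaAntidiagonalEquivProd ⟨k, p⟩))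
          = ∑ p ∈ Finset.HasAntidiagonal.antidiagonal k, f p from
        Finset.sum_coe_sort (Finset.HasAntidiagonal.antidiagonal k) f]
      rw [← sum_antidiagonal_pow r s k, Finset.mul_sum]
      apply Finset.sum_congr rfl
      intro p hp
      have hpk : p.1 + p.2 = k := by simpa using hp
      rw [hfdef]
      simp only [hpk]
      push_cast
      ring
    apply Summable.of_nonneg_of_le (fun k => tsum_nonneg (fun p => hnn _))
      (fun k => ?_) (summable_poch_aux (‖α‖ + 1) (by positivity) 0 (t := r + s)
        (by positivity) h)
    · rw [hval k]
      simp only [add_zero]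
      have h1 : (0:ℝ) ≤ (r + s) ^ k / k.factorial := by positivity
      calc ‖cpoch α k‖ * ((r + s) ^ k / k.factorial)
          ≤ (ascPochhammer ℝ k).eval (‖α‖ + 1) * ((r + s) ^ k / k.factorial) :=
            mul_le_mul_of_nonneg_right (norm_cpoch_le α k) h1
      _ = (ascPochhammer ℝ k).eval (‖α‖ + 1) / k.factorial * (r + s) ^ k := by ring

section Binomial
variable (α : ℂ)

/-- coefficient of binomial series -/
noncomputable def bc (k : ℕ) : ℂ := cpoch α k / (k.factorial : ℂ)

lemma bc_succ (k : ℕ) : (k + 1 : ℂ) * bc α (k + 1) = (α + k) * bc α k := by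
  unfold bc
  rw [cpoch_succ]
  have h1 : ((k + 1).factorial : ℂ) = (k + 1) * (k.factorial : ℂ) := by
    rw [Nat.factorial_succ]; push_cast; ring
  rw [h1]
  have h2 : ((k:ℂ) + 1) ≠ 0 := by
    have := Nat.cast_add_one_ne_zero (R := ℂ) k
    simpa using this
  have h3 : ((k.factorial : ℕ) : ℂ) ≠ 0 := by
    exact_mod_cast k.factorial_ne_zero
  field_simp

lemma norm_bc_le (k : ℕ) :
    ‖bc α k‖ ≤ (ascPochhammer ℝ k).eval (‖α‖ + 1) / (k.factorial : ℝ) := by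
  unfold bc
  rw [norm_div]
  have h1 : ‖((k.factorial : ℕ) : ℂ)‖ = (k.factorial : ℝ) := by
    rw [Complex.norm_natCast]
  rw [h1]
  have h2 : (0:ℝ) < (k.factorial : ℝ) := by positivity
  gcongr
  exact norm_cpoch_le α k

lemma summable_bc_pow {t : ℝ} (ht0 : 0 ≤ t) (ht : t < 1) :
    Summable (fun k : ℕ => ‖bc α k‖ * t ^ k) := by
  apply Summable.of_nonneg_of_le (fun k => by positivity) (fun k => ?_)
    (summable_poch_aux (‖α‖ + 1) (by positivity) 0 ht0 ht)
  simp only [add_zero]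
  exact mul_le_mul_of_nonneg_right (norm_bc_le α k) (by positivity)

lemma summable_bc_mul_pow {w : ℂ} (hw : ‖w‖ < 1) :
    Summable (fun k : ℕ => bc α k * w ^ k) := by
  apply Summable.of_norm
  apply Summable.of_nonneg_of_le (fun k => norm_nonneg _) (fun k => ?_)
    (summable_bc_pow α (norm_nonneg w) hw)
  rw [norm_mul, norm_pow]

end Binomial

section Bin2
variable (α : ℂ)

lemma summable_u {ρ : ℝ} (h0 : 0 ≤ ρ) (h1 : ρ < 1) :
    Summable (fun k : ℕ => ‖bc α k‖ * k * ρ ^ (k - 1)) := by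
  rw [← summable_nat_add_iff 1]
  apply Summable.of_nonneg_of_le (fun k => by positivity) (fun k => ?_)
    (summable_poch_aux (‖α‖ + 1) (by positivity) 1 h0 h1)
  simp only [Nat.add_sub_cancel]
  have hb : ‖bc α (k + 1)‖ ≤ (ascPochhammer ℝ (k + 1)).eval (‖α‖ + 1) / ((k+1).factorial : ℝ) :=
    norm_bc_le α (k + 1)
  have hfacteq : ((k+1).factorial : ℝ) = (k + 1) * (k.factorial : ℝ) := by
    rw [Nat.factorial_succ]; push_cast; ring
  calc ‖bc α (k + 1)‖ * (↑(k + 1)) * ρ ^ k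
      ≤ (ascPochhammer ℝ (k + 1)).eval (‖α‖ + 1) / ((k+1).factorial : ℝ) * (↑(k + 1)) * ρ ^ k := by
        gcongr
  _ = (ascPochhammer ℝ (k + 1)).eval (‖α‖ + 1) / (k.factorial : ℝ) * ρ ^ k := by
        rw [hfacteq]
        have h2 : ((k:ℝ) + 1) ≠ 0 := by positivity
        have h3 : (k.factorial : ℝ) ≠ 0 := by positivity
        push_cast
        field_simp

lemma summable_dterm {y : ℂ} (hy : ‖y‖ < 1) :
    Summable (fun k : ℕ => bc α k * ((k : ℂ) * y ^ (k - 1))) := by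
  apply Summable.of_norm
  apply Summable.of_nonneg_of_le (fun k => norm_nonneg _) (fun k => ?_)
    (summable_u α (norm_nonneg y) hy)
  rw [norm_mul, norm_mul, norm_pow, Complex.norm_natCast, ← mul_assoc]

lemma deriv_identity {y : ℂ} (hy : ‖y‖ < 1) :
    (1 - y) * (∑' k : ℕ, bc α k * ((k : ℂ) * y ^ (k - 1))) = α * ∑' k : ℕ, bc α k * y ^ k := by
  have hsd := summable_dterm α hy
  have hsg := summable_bc_mul_pow α hy
  have hshift : (∑' k : ℕ, bc α k * ((k : ℂ) * y ^ (k - 1)))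
      = ∑' k : ℕ, bc α (k + 1) * (((k:ℂ) + 1) * y ^ k) := by
    rw [Summable.tsum_eq_zero_add hsd]
    simp only [Nat.cast_zero, zero_mul, mul_zero, zero_add]
    apply tsum_congr
    intro k
    simp only [Nat.add_sub_cancel, Nat.cast_add, Nat.cast_one]
  have hterm : ∀ k : ℕ, bc α (k + 1) * (((k:ℂ) + 1) * y ^ k)
      = α * (bc α k * y ^ k) + (bc α k * ((k:ℂ) * y ^ (k - 1))) * y := by
    intro k
    have h1 : ((k:ℂ) + 1) * bc α (k + 1) = (α + k) * bc α k := bc_succ α k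
    have h2 : (k:ℂ) * y ^ (k - 1) * y = (k:ℂ) * y ^ k := by
      cases k with
      | zero => simp
      | succ n => simp only [Nat.add_sub_cancel]; ring
    calc bc α (k + 1) * (((k:ℂ) + 1) * y ^ k) = (((k:ℂ) + 1) * bc α (k + 1)) * y ^ k := by ring
    _ = ((α + k) * bc α k) * y ^ k := by rw [h1]
    _ = α * (bc α k * y ^ k) + bc α k * ((k:ℂ) * y ^ k) := by ring
    _ = α * (bc α k * y ^ k) + (bc α k * ((k:ℂ) * y ^ (k - 1))) * y := by rw [← h2]; ring
  have step : (∑' k : ℕ, bc α (k + 1) * (((k:ℂ) + 1) * y ^ k))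
      = ∑' k : ℕ, (α * (bc α k * y ^ k) + (bc α k * ((k:ℂ) * y ^ (k - 1))) * y) :=
    tsum_congr hterm
  have hkey : (∑' k : ℕ, bc α k * ((k : ℂ) * y ^ (k - 1)))
      = α * (∑' k : ℕ, bc α k * y ^ k)
        + (∑' k : ℕ, bc α k * ((k : ℂ) * y ^ (k - 1))) * y := by
    conv_lhs => rw [hshift, step]
    rw [Summable.tsum_add (hsg.mul_left α) (hsd.mul_right y), tsum_mul_left, tsum_mul_right]
  linear_combination hkey

lemma hasSum_binomial {w : ℂ} (hw : ‖w‖ < 1) :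
    HasSum (fun k : ℕ => bc α k * w ^ k) ((1 - w) ^ (-α)) := by
  set ρ : ℝ := (‖w‖ + 1) / 2 with hρdef
  have hρ0 : 0 < ρ := by positivity
  have hρ1 : ρ < 1 := by rw [hρdef]; linarith [hw]
  have hwρ : ‖w‖ < ρ := by rw [hρdef]; linarith [hw]
  set s : Set ℂ := Metric.ball (0:ℂ) ρ with hsdef
  have hopen : IsOpen s := Metric.isOpen_ball
  have hconv : Convex ℝ s := convex_ball 0 ρ
  have hmem : ∀ {y : ℂ}, y ∈ s → ‖y‖ < ρ := by
    intro y hy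
    simpa [hsdef, Metric.mem_ball, dist_eq_norm] using hy
  have h0mem : (0:ℂ) ∈ s := by simp [hsdef, Metric.mem_ball, hρ0]
  have hwmem : w ∈ s := by simpa [hsdef, Metric.mem_ball, dist_eq_norm] using hwρ
  set g : ℂ → ℂ := fun z => ∑' k : ℕ, bc α k * z ^ k with hgdef
  set D : ℂ → ℂ := fun y => ∑' k : ℕ, bc α k * ((k : ℂ) * y ^ (k - 1)) with hDdef
  have hgd : ∀ y ∈ s, HasDerivAt g (D y) y := by
    intro y hy
    apply hasDerivAt_tsum_of_isPreconnected
      (summable_u α (le_of_lt hρ0) hρ1) hopen hconv.isPreconnected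
      (g := fun k z => bc α k * z ^ k) (g' := fun k y => bc α k * ((k:ℂ) * y ^ (k - 1)))
      ?_ ?_ h0mem ?_ hy
    · intro k z _
      exact (hasDerivAt_pow k z).const_mul (bc α k)
    · intro k z hz
      rw [norm_mul, norm_mul, norm_pow, Complex.norm_natCast, ← mul_assoc]
      gcongr
      · exact le_of_lt (hmem hz)
    · exact summable_bc_mul_pow α (by simpa using zero_lt_one)
  have hlt1 : ∀ {y : ℂ}, y ∈ s → ‖y‖ < 1 := fun hy => lt_trans (hmem hy) hρ1
  have hslit : ∀ {y : ℂ}, y ∈ s → (1 - y) ∈ Complex.slitPlane := by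
    intro y hy
    rw [Complex.mem_slitPlane_iff]
    left
    have h1 : y.re ≤ ‖y‖ := by
      calc y.re ≤ |y.re| := le_abs_self _
      _ ≤ ‖y‖ := Complex.abs_re_le_norm y
      _ = ‖y‖ := rfl
    simp only [Complex.sub_re, Complex.one_re]
    linarith [hlt1 hy]
  have hne : ∀ {y : ℂ}, y ∈ s → (1 - y) ≠ 0 := by
    intro y hy
    exact Complex.slitPlane_ne_zero (hslit hy)
  set h : ℂ → ℂ := fun z => (1 - z) ^ α * g z with hhdef
  have hh : ∀ y ∈ s, HasDerivAt h 0 y := by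
    intro y hy
    have d1 : HasDerivAt (fun z : ℂ => (1 - z) ^ α) (α * (1 - y) ^ (α - 1) * (-1)) y := by
      have dlin : HasDerivAt (fun z : ℂ => 1 - z) (-1) y := by
        simpa using (hasDerivAt_id y).const_sub 1
      exact dlin.cpow_const (hslit hy)
    have dtot := d1.mul (hgd y hy)
    have hval : α * (1 - y) ^ (α - 1) * (-1) * g y + (1 - y) ^ α * D y = 0 := by
      have e1 : (1 - y) ^ α = (1 - y) ^ (α - 1) * (1 - y) := by
        conv_lhs => rw [show α = α - 1 + 1 by ring]
        rw [Complex.cpow_add _ _ (hne hy), Complex.cpow_one]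
      rw [e1]
      have e2 := deriv_identity α (hlt1 hy)
      calc α * (1 - y) ^ (α - 1) * (-1) * g y + (1 - y) ^ (α - 1) * (1 - y) * D y
          = (1 - y) ^ (α - 1) * ((1 - y) * D y - α * g y) := by ring
      _ = (1 - y) ^ (α - 1) * (α * g y - α * g y) := by rw [e2]
      _ = 0 := by ring
    rw [← hval]
    exact dtot
  have hconst : h w = h 0 := by
    apply hconv.is_const_of_fderivWithin_eq_zero (𝕜 := ℂ)
      (fun y hy => ((hh y hy).differentiableAt).differentiableWithinAt) ?_ hwmem h0mem
    intro y hy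
    have := ((hh y hy).hasFDerivAt).hasFDerivWithinAt.fderivWithin (hopen.uniqueDiffWithinAt hy)
    rw [this]
    ext v
    simp
  have hg0 : g 0 = 1 := by
    rw [hgdef]
    simp only
    rw [tsum_eq_single 0]
    · simp [bc, cpoch_zero]
    · intro k hk
      simp [zero_pow hk]
  have hh0 : h 0 = 1 := by
    rw [hhdef]
    simp only
    rw [hg0, sub_zero, Complex.one_cpow, mul_one]
  have heq : (1 - w) ^ α * g w = 1 := by
    have : h w = (1 - w) ^ α * g w := rfl
    rw [← this, hconst, hh0]
  have hgw : g w = ((1 - w) ^ α)⁻¹ := (inv_eq_of_mul_eq_one_right heq).symm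
  have hfin : g w = (1 - w) ^ (-α) := by
    rw [hgw, Complex.cpow_neg]
  have hsum := (summable_bc_mul_pow α hw).hasSum
  rw [show (∑' k : ℕ, bc α k * w ^ k) = g w from rfl, hfin] at hsum
  exact hsum

end Bin2

lemma dterm_norm (α : ℂ) (a b : ℂ) (p : ℕ × ℕ) :
    ‖cpoch α (p.1 + p.2) / ((p.1.factorial : ℂ) * (p.2.factorial : ℂ)) * a ^ p.1 * b ^ p.2‖
      = ‖cpoch α (p.1 + p.2)‖ / (p.1.factorial * p.2.factorial) * ‖a‖ ^ p.1 * ‖b‖ ^ p.2 := by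
  rw [norm_mul, norm_mul, norm_div, norm_mul, norm_pow, norm_pow,
    Complex.norm_natCast, Complex.norm_natCast]

lemma summable_dbl (α : ℂ) {a b : ℂ} (h : ‖a‖ + ‖b‖ < 1) :
    Summable (fun p : ℕ × ℕ =>
      cpoch α (p.1 + p.2) / ((p.1.factorial : ℂ) * (p.2.factorial : ℂ)) * a ^ p.1 * b ^ p.2) := by
  apply Summable.of_norm
  have := summable_double_norm α (norm_nonneg a) (norm_nonneg b) h
  apply this.congr
  intro p
  exact (dterm_norm α a b p).symm

lemma hasSum_dbl (α : ℂ) {a b : ℂ} (h : ‖a‖ + ‖b‖ < 1) :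
    HasSum (fun p : ℕ × ℕ =>
      cpoch α (p.1 + p.2) / ((p.1.factorial : ℂ) * (p.2.factorial : ℂ)) * a ^ p.1 * b ^ p.2)
      ((1 - a - b) ^ (-α)) := by
  set f : ℕ × ℕ → ℂ := fun p =>
      cpoch α (p.1 + p.2) / ((p.1.factorial : ℂ) * (p.2.factorial : ℂ)) * a ^ p.1 * b ^ p.2
    with hfdef
  have hsumf : Summable f := summable_dbl α h
  have htsum : ∑' p, f p = (1 - a - b) ^ (-α) := by
    rw [← Finset.HasAntidiagonal.sigmaAntidiagonalEquivProd.tsum_eq f]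
    have hsig : Summable (f ∘ Finset.HasAntidiagonal.sigmaAntidiagonalEquivProd) :=
      Finset.HasAntidiagonal.sigmaAntidiagonalEquivProd.summable_iff.mpr hsumf
    rw [show (∑' c : (n : ℕ) × {x // x ∈ Finset.HasAntidiagonal.antidiagonal n}, f (Finset.HasAntidiagonal.sigmaAntidiagonalEquivProd c)) = ∑' c : (n : ℕ) × {x // x ∈ Finset.HasAntidiagonal.antidiagonal n}, (f ∘ Finset.HasAntidiagonal.sigmaAntidiagonalEquivProd) c from rfl, Summable.tsum_sigma hsig]
    have hfiber : ∀ k : ℕ, (∑' p : {p : ℕ × ℕ // p ∈ Finset.HasAntidiagonal.antidiagonal k},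
        f (Finset.HasAntidiagonal.sigmaAntidiagonalEquivProd ⟨k, p⟩)) = bc α k * (a + b) ^ k := by
      intro k
      rw [tsum_fintype]
      rw [show (∑ p : {p : ℕ × ℕ // p ∈ Finset.HasAntidiagonal.antidiagonal k},
          f (Finset.HasAntidiagonal.sigmaAntidiagonalEquivProd ⟨k, p⟩))
          = ∑ p ∈ Finset.HasAntidiagonal.antidiagonal k, f p from
        Finset.sum_coe_sort (Finset.HasAntidiagonal.antidiagonal k) f]
      have : ∑ p ∈ Finset.HasAntidiagonal.antidiagonal k, f p
          = cpoch α k * ∑ p ∈ Finset.HasAntidiagonal.antidiagonal k,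
              a ^ p.1 * b ^ p.2 / ((p.1.factorial : ℂ) * (p.2.factorial : ℂ)) := by
        rw [Finset.mul_sum]
        apply Finset.sum_congr rfl
        intro p hp
        have hpk : p.1 + p.2 = k := by simpa using hp
        rw [hfdef]
        simp only [hpk]
        ring
      rw [this, sum_antidiagonal_pow a b k]
      unfold bc
      ring
    have : (∑' k : ℕ, ∑' p : {p : ℕ × ℕ // p ∈ Finset.HasAntidiagonal.antidiagonal k},
        f (Finset.HasAntidiagonal.sigmaAntidiagonalEquivProd ⟨k, p⟩)) = ∑' k : ℕ, bc α k * (a + b) ^ k :=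
      tsum_congr hfiber
    rw [show (∑' (n : ℕ) (c : {x // x ∈ Finset.HasAntidiagonal.antidiagonal n}),
        (f ∘ ⇑Finset.HasAntidiagonal.sigmaAntidiagonalEquivProd) ⟨n, c⟩) = ∑' k : ℕ, bc α k * (a + b) ^ k
      from this]
    have hab : ‖a + b‖ < 1 := lt_of_le_of_lt (norm_add_le a b) h
    rw [(hasSum_binomial α hab).tsum_eq]
    rw [sub_sub]
  rw [← htsum]
  exact hsumf.hasSum

lemma Gamma_add_nat {x : ℂ} (hx : 0 < x.re) (n : ℕ) :
    Complex.Gamma (x + n) = cpoch x n * Complex.Gamma x := by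
  induction n with
  | zero => simp [cpoch_zero]
  | succ n ih =>
      have hne : x + (n:ℂ) ≠ 0 := by
        intro hc
        have : (x + (n:ℂ)).re = 0 := by rw [hc]; simp
        simp only [Complex.add_re, Complex.natCast_re] at this
        have : x.re = -(n:ℝ) := by linarith
        have hn : (0:ℝ) ≤ (n:ℝ) := Nat.cast_nonneg n
        linarith [hx]
      have h1 : x + ((n+1 : ℕ):ℂ) = (x + n) + 1 := by push_cast; ring
      rw [h1, Complex.Gamma_add_one _ hne, ih, cpoch_succ]
      ring

lemma cpoch_ne_zero {x : ℂ} (hx : 0 < x.re) (n : ℕ) : cpoch x n ≠ 0 := by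
  induction n with
  | zero => rw [cpoch_zero]; exact one_ne_zero
  | succ n ih =>
      rw [cpoch_succ]
      apply mul_ne_zero ih
      intro hc
      have : (x + (n:ℂ)).re = 0 := by rw [hc]; simp
      simp only [Complex.add_re, Complex.natCast_re] at this
      have hn : (0:ℝ) ≤ (n:ℝ) := Nat.cast_nonneg n
      linarith [hx]

lemma betaIntegral_shift {b c : ℂ} (hb : 0 < b.re) (hcb : 0 < (c - b).re) (m : ℕ) :
    Complex.betaIntegral (b + m) (c - b)
      = cpoch b m / cpoch c m * (Complex.Gamma b * Complex.Gamma (c - b) / Complex.Gamma c) := by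
  have hc : 0 < c.re := by
    have := Complex.sub_re c b
    linarith [hb, hcb, this]
  have hbm : 0 < (b + (m:ℂ)).re := by
    simp only [Complex.add_re, Complex.natCast_re]
    have : (0:ℝ) ≤ (m:ℝ) := Nat.cast_nonneg m
    linarith
  have key := Complex.Gamma_mul_Gamma_eq_betaIntegral hbm hcb
  have harg : b + (m:ℂ) + (c - b) = c + m := by ring
  rw [harg] at key
  have hGcm : Complex.Gamma (c + m) ≠ 0 :=
    Complex.Gamma_ne_zero_of_re_pos (by
      simp only [Complex.add_re, Complex.natCast_re]
      have : (0:ℝ) ≤ (m:ℝ) := Nat.cast_nonneg m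
      linarith)
  have hbeta : Complex.betaIntegral (b + m) (c - b)
      = Complex.Gamma (b + m) * Complex.Gamma (c - b) / Complex.Gamma (c + m) := by
    field_simp
    rw [key]
    ring
  rw [hbeta, Gamma_add_nat hb m, Gamma_add_nat hc m]
  have h1 := cpoch_ne_zero hc m
  have h2 := Complex.Gamma_ne_zero_of_re_pos hc
  field_simp

lemma betaIntegrand_integrableOn {b v : ℂ} (hb : 0 < b.re) (hv : 0 < v.re) :
    IntegrableOn (fun x : ℝ => (x:ℂ) ^ (b - 1) * ((1:ℂ) - x) ^ (v - 1)) (Set.Ioo 0 1) := by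
  have := Complex.betaIntegral_convergent hb hv
  rwa [intervalIntegrable_iff_integrableOn_Ioo_of_le zero_le_one] at this

lemma setIntegral_Ioo_beta {b v : ℂ} :
    ∫ x in Set.Ioo (0:ℝ) 1, (x:ℂ) ^ (b - 1) * ((1:ℂ) - x) ^ (v - 1)
      = Complex.betaIntegral b v := by
  rw [Complex.betaIntegral, intervalIntegral.integral_of_le zero_le_one,
    integral_Ioc_eq_integral_Ioo]

lemma norm_betaIntegrand_le {b : ℂ} (hb : 0 < b.re) (v : ℂ) (m : ℕ) {x : ℝ}
    (hx : x ∈ Set.Ioo (0:ℝ) 1) :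
    ‖(x:ℂ) ^ (b + m - 1) * ((1:ℂ) - x) ^ (v - 1)‖
      ≤ ‖(x:ℂ) ^ (b - 1) * ((1:ℂ) - x) ^ (v - 1)‖ := by
  obtain ⟨hx0, hx1⟩ := hx
  rw [norm_mul, norm_mul]
  apply mul_le_mul_of_nonneg_right _ (norm_nonneg _)
  rw [
    Complex.norm_cpow_eq_rpow_re_of_pos hx0, Complex.norm_cpow_eq_rpow_re_of_pos hx0]
  apply Real.rpow_le_rpow_of_exponent_ge hx0 (le_of_lt hx1)
  simp only [Complex.sub_re, Complex.add_re, Complex.one_re, Complex.natCast_re]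
  have : (0:ℝ) ≤ (m:ℝ) := Nat.cast_nonneg m
  linarith

lemma norm_betaIntegral_shift_le {b : ℂ} (hb : 0 < b.re) {v : ℂ} (hv : 0 < v.re) (m : ℕ) :
    ‖Complex.betaIntegral (b + m) (v)‖
      ≤ ∫ x in Set.Ioo (0:ℝ) 1, ‖(x:ℂ) ^ (b - 1) * ((1:ℂ) - x) ^ (v - 1)‖ := by
  have hbm : 0 < (b + (m:ℂ)).re := by
    simp only [Complex.add_re, Complex.natCast_re]
    have : (0:ℝ) ≤ (m:ℝ) := Nat.cast_nonneg m
    linarith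
  rw [← setIntegral_Ioo_beta]
  calc ‖∫ x in Set.Ioo (0:ℝ) 1, (x:ℂ) ^ (b + m - 1) * ((1:ℂ) - x) ^ (v - 1)‖
      ≤ ∫ x in Set.Ioo (0:ℝ) 1, ‖(x:ℂ) ^ (b + m - 1) * ((1:ℂ) - x) ^ (v - 1)‖ :=
        norm_integral_le_integral_norm _
  _ ≤ ∫ x in Set.Ioo (0:ℝ) 1, ‖(x:ℂ) ^ (b - 1) * ((1:ℂ) - x) ^ (v - 1)‖ := by
      apply setIntegral_mono_on
      · exact (betaIntegrand_integrableOn hbm hv).norm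
      · exact (betaIntegrand_integrableOn hb hv).norm
      · exact measurableSet_Ioo
      · intro x hx
        exact norm_betaIntegrand_le hb v m hx

lemma integral_norm_betaIntegrand_nonneg {b v : ℂ} :
    0 ≤ ∫ x in Set.Ioo (0:ℝ) 1, ‖(x:ℂ) ^ (b - 1) * ((1:ℂ) - x) ^ (v - 1)‖ :=
  integral_nonneg (fun x => norm_nonneg _)

lemma re_add_nat_pos {b : ℂ} (hb : 0 < b.re) (m : ℕ) : 0 < (b + (m:ℂ)).re := by
  simp only [Complex.add_re, Complex.natCast_re]
  have : (0:ℝ) ≤ (m:ℝ) := Nat.cast_nonneg m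
  linarith

lemma inner_exchange (α : ℂ) {b c : ℂ} (hb : 0 < b.re) (hcb : 0 < (c - b).re)
    {w v : ℂ} (h : ‖w‖ + ‖v‖ < 1) :
    ∫ x in Set.Ioo (0:ℝ) 1,
        (x:ℂ) ^ (b - 1) * ((1:ℂ) - x) ^ (c - b - 1) * ((1:ℂ) - w * x - v) ^ (-α)
      = ∑' p : ℕ × ℕ, cpoch α (p.1 + p.2) / ((p.1.factorial : ℂ) * (p.2.factorial : ℂ))
          * w ^ p.1 * v ^ p.2 * Complex.betaIntegral (b + p.1) (c - b) := by
  set F : ℕ × ℕ → ℝ → ℂ := fun p x =>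
    cpoch α (p.1 + p.2) / ((p.1.factorial : ℂ) * (p.2.factorial : ℂ)) * w ^ p.1 * v ^ p.2
      * ((x:ℂ) ^ (b + p.1 - 1) * ((1:ℂ) - x) ^ (c - b - 1)) with hFdef
  have hpt : ∀ x ∈ Set.Ioo (0:ℝ) 1,
      (x:ℂ) ^ (b - 1) * ((1:ℂ) - x) ^ (c - b - 1) * ((1:ℂ) - w * x - v) ^ (-α)
        = ∑' p : ℕ × ℕ, F p x := by
    intro x hx
    obtain ⟨hx0, hx1⟩ := hx
    have hxc : (x:ℂ) ≠ 0 := by exact_mod_cast ne_of_gt hx0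
    have h1 : ‖w * (x:ℂ)‖ + ‖v‖ < 1 := by
      rw [norm_mul]
      have hnx : ‖(x:ℂ)‖ = x := by
        rw [Complex.norm_real]
        exact abs_of_pos hx0
      rw [hnx]
      have h2 : ‖w‖ * x ≤ ‖w‖ := mul_le_of_le_one_right (norm_nonneg w) (le_of_lt hx1)
      linarith
    have hs := (hasSum_dbl α h1).mul_left ((x:ℂ) ^ (b - 1) * ((1:ℂ) - x) ^ (c - b - 1))
    have hterm : ∀ p : ℕ × ℕ,
        (x:ℂ) ^ (b - 1) * ((1:ℂ) - x) ^ (c - b - 1)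
          * (cpoch α (p.1 + p.2) / ((p.1.factorial : ℂ) * (p.2.factorial : ℂ))
              * (w * x) ^ p.1 * v ^ p.2)
        = F p x := by
      intro p
      have hpow : (x:ℂ) ^ (b + p.1 - 1) = (x:ℂ) ^ (b - 1) * (x:ℂ) ^ (p.1 : ℕ) := by
        rw [← Complex.cpow_natCast, ← Complex.cpow_add _ _ hxc,
          show b - 1 + (p.1:ℂ) = b + p.1 - 1 by ring]
      rw [hFdef]
      simp only
      rw [hpow, mul_pow]
      ring
    have hfe : (fun p : ℕ × ℕ =>
        (x:ℂ) ^ (b - 1) * ((1:ℂ) - x) ^ (c - b - 1)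
          * (cpoch α (p.1 + p.2) / ((p.1.factorial : ℂ) * (p.2.factorial : ℂ))
              * (w * x) ^ p.1 * v ^ p.2)) = fun p => F p x := funext hterm
    have hs2 : HasSum (fun p : ℕ × ℕ => F p x)
        ((x:ℂ) ^ (b - 1) * ((1:ℂ) - x) ^ (c - b - 1) * ((1:ℂ) - w * x - v) ^ (-α)) := by
      rw [← hfe]
      exact hs
    exact hs2.tsum_eq.symm
  rw [setIntegral_congr_fun measurableSet_Ioo hpt]
  set B : ℝ := ∫ x in Set.Ioo (0:ℝ) 1, ‖(x:ℂ) ^ (b - 1) * ((1:ℂ) - x) ^ (c - b - 1)‖ with hBdef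
  have hB0 : 0 ≤ B := integral_nonneg (fun x => norm_nonneg _)
  have hint : ∀ p : ℕ × ℕ, Integrable (F p) (volume.restrict (Set.Ioo 0 1)) := by
    intro p
    exact (betaIntegrand_integrableOn (re_add_nat_pos hb p.1) hcb).const_mul _
  have hbound : ∀ p : ℕ × ℕ, (∫ x in Set.Ioo (0:ℝ) 1, ‖F p x‖)
      ≤ ‖cpoch α (p.1 + p.2)‖ / (p.1.factorial * p.2.factorial) * ‖w‖ ^ p.1 * ‖v‖ ^ p.2 * B := by
    intro p
    have e1 : ∀ x : ℝ, ‖F p x‖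
        = ‖cpoch α (p.1 + p.2) / ((p.1.factorial : ℂ) * (p.2.factorial : ℂ))
            * w ^ p.1 * v ^ p.2‖ * ‖(x:ℂ) ^ (b + p.1 - 1) * ((1:ℂ) - x) ^ (c - b - 1)‖ := by
      intro x
      rw [hFdef]
      simp only
      rw [norm_mul]
    calc (∫ x in Set.Ioo (0:ℝ) 1, ‖F p x‖)
        = ‖cpoch α (p.1 + p.2) / ((p.1.factorial : ℂ) * (p.2.factorial : ℂ))
            * w ^ p.1 * v ^ p.2‖
          * ∫ x in Set.Ioo (0:ℝ) 1, ‖(x:ℂ) ^ (b + p.1 - 1) * ((1:ℂ) - x) ^ (c - b - 1)‖ := by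
          rw [← integral_const_mul]
          exact setIntegral_congr_fun measurableSet_Ioo (fun x _ => e1 x)
    _ ≤ ‖cpoch α (p.1 + p.2) / ((p.1.factorial : ℂ) * (p.2.factorial : ℂ))
            * w ^ p.1 * v ^ p.2‖ * B := by
          apply mul_le_mul_of_nonneg_left _ (norm_nonneg _)
          rw [hBdef]
          apply setIntegral_mono_on
          · exact (betaIntegrand_integrableOn (re_add_nat_pos hb p.1) hcb).norm
          · exact (betaIntegrand_integrableOn hb hcb).norm
          · exact measurableSet_Ioo
          · intro x hx
            exact norm_betaIntegrand_le hb (c - b) p.1 hx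
    _ = ‖cpoch α (p.1 + p.2)‖ / (p.1.factorial * p.2.factorial) * ‖w‖ ^ p.1 * ‖v‖ ^ p.2 * B := by
          rw [dterm_norm]
  have hsum : Summable (fun p : ℕ × ℕ => ∫ x in Set.Ioo (0:ℝ) 1, ‖F p x‖) := by
    apply Summable.of_nonneg_of_le
      (fun p => integral_nonneg (fun x => norm_nonneg _)) hbound
    exact (summable_double_norm α (norm_nonneg w) (norm_nonneg v) h).mul_right B
  rw [← MeasureTheory.integral_tsum_of_summable_integral_norm hint hsum]
  apply tsum_congr
  intro p
  rw [hFdef]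
  simp only
  rw [integral_const_mul, setIntegral_Ioo_beta]

/-- Integral representation of Appell's `F₂`. -/
theorem statement0 (α β₁ β₂ γ₁ γ₂ z₁ z₂ : ℂ)
    (hβ₁ : 0 < β₁.re) (hγ₁ : β₁.re < γ₁.re)
    (hβ₂ : 0 < β₂.re) (hγ₂ : β₂.re < γ₂.re)
    (hz : ‖z₁‖ + ‖z₂‖ < 1) :
    appellF2 α β₁ β₂ γ₁ γ₂ z₁ z₂ =
      Complex.Gamma γ₁ * Complex.Gamma γ₂ /
        (Complex.Gamma β₁ * Complex.Gamma β₂ * Complex.Gamma (γ₁ - β₁) *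
          Complex.Gamma (γ₂ - β₂)) *
      ∫ u in Set.Ioo (0:ℝ) 1, ∫ x in Set.Ioo (0:ℝ) 1,
        (u : ℂ) ^ (β₂ - 1) * ((1 : ℂ) - u) ^ (γ₂ - β₂ - 1) *
        (x : ℂ) ^ (β₁ - 1) * ((1 : ℂ) - x) ^ (γ₁ - β₁ - 1) *
        ((1 : ℂ) - z₁ * x - z₂ * u) ^ (-α) := by
  have hz' : ‖z₁‖ + ‖z₂‖ < 1 := hz
  have hcb₁ : 0 < (γ₁ - β₁).re := by rw [Complex.sub_re]; linarith
  have hcb₂ : 0 < (γ₂ - β₂).re := by rw [Complex.sub_re]; linarith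
  have hγ₁' : 0 < γ₁.re := lt_trans hβ₁ hγ₁
  have hγ₂' : 0 < γ₂.re := lt_trans hβ₂ hγ₂
  -- the p-indexed summand after both integrations
  set G : ℕ × ℕ → ℝ → ℂ := fun p u =>
    cpoch α (p.1 + p.2) / ((p.1.factorial : ℂ) * (p.2.factorial : ℂ)) * z₁ ^ p.1 * z₂ ^ p.2
      * Complex.betaIntegral (β₁ + p.1) (γ₁ - β₁)
      * ((u:ℂ) ^ (β₂ + p.2 - 1) * ((1:ℂ) - u) ^ (γ₂ - β₂ - 1)) with hGdef
  -- step 1+2 : inner integral evaluation, for u ∈ Ioo 0 1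
  have step12 : ∀ u ∈ Set.Ioo (0:ℝ) 1,
      (∫ x in Set.Ioo (0:ℝ) 1,
        (u : ℂ) ^ (β₂ - 1) * ((1 : ℂ) - u) ^ (γ₂ - β₂ - 1) *
        (x : ℂ) ^ (β₁ - 1) * ((1 : ℂ) - x) ^ (γ₁ - β₁ - 1) *
        ((1 : ℂ) - z₁ * x - z₂ * u) ^ (-α)) = ∑' p : ℕ × ℕ, G p u := by
    intro u hu
    obtain ⟨hu0, hu1⟩ := hu
    have huc : (u:ℂ) ≠ 0 := by exact_mod_cast ne_of_gt hu0
    have hv : ‖z₁‖ + ‖z₂ * u‖ < 1 := by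
      rw [norm_mul]
      have hnu : ‖(u:ℂ)‖ = u := by rw [Complex.norm_real]; exact abs_of_pos hu0
      rw [hnu]
      have h2 : ‖z₂‖ * u ≤ ‖z₂‖ := mul_le_of_le_one_right (norm_nonneg z₂) (le_of_lt hu1)
      linarith
    have e0 : (∫ x in Set.Ioo (0:ℝ) 1,
        (u : ℂ) ^ (β₂ - 1) * ((1 : ℂ) - u) ^ (γ₂ - β₂ - 1) *
        (x : ℂ) ^ (β₁ - 1) * ((1 : ℂ) - x) ^ (γ₁ - β₁ - 1) *
        ((1 : ℂ) - z₁ * x - z₂ * u) ^ (-α))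
        = (u : ℂ) ^ (β₂ - 1) * ((1 : ℂ) - u) ^ (γ₂ - β₂ - 1) *
          ∫ x in Set.Ioo (0:ℝ) 1,
            (x : ℂ) ^ (β₁ - 1) * ((1 : ℂ) - x) ^ (γ₁ - β₁ - 1) *
            ((1 : ℂ) - z₁ * x - z₂ * u) ^ (-α) := by
      rw [← integral_const_mul]
      apply setIntegral_congr_fun measurableSet_Ioo
      intro x _
      ring
    rw [e0, inner_exchange α hβ₁ hcb₁ hv, ← tsum_mul_left]
    apply tsum_congr
    intro p
    have hpow : (u:ℂ) ^ (β₂ + p.2 - 1) = (u:ℂ) ^ (β₂ - 1) * (u:ℂ) ^ (p.2 : ℕ) := by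
      rw [← Complex.cpow_natCast, ← Complex.cpow_add _ _ huc,
        show β₂ - 1 + (p.2:ℂ) = β₂ + p.2 - 1 by ring]
    rw [hGdef]
    simp only
    rw [hpow, mul_pow]
    ring
  rw [setIntegral_congr_fun measurableSet_Ioo step12]
  -- step 3 : outer interchange
  set B₁ : ℝ := ∫ x in Set.Ioo (0:ℝ) 1, ‖(x:ℂ) ^ (β₁ - 1) * ((1:ℂ) - x) ^ (γ₁ - β₁ - 1)‖
    with hB₁def
  set B₂ : ℝ := ∫ x in Set.Ioo (0:ℝ) 1, ‖(x:ℂ) ^ (β₂ - 1) * ((1:ℂ) - x) ^ (γ₂ - β₂ - 1)‖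
    with hB₂def
  have hB₂0 : 0 ≤ B₂ := integral_nonneg (fun x => norm_nonneg _)
  have hint : ∀ p : ℕ × ℕ, Integrable (G p) (volume.restrict (Set.Ioo 0 1)) := by
    intro p
    exact (betaIntegrand_integrableOn (re_add_nat_pos hβ₂ p.2) hcb₂).const_mul _
  have hbound : ∀ p : ℕ × ℕ, (∫ u in Set.Ioo (0:ℝ) 1, ‖G p u‖)
      ≤ ‖cpoch α (p.1 + p.2)‖ / (p.1.factorial * p.2.factorial) * ‖z₁‖ ^ p.1 * ‖z₂‖ ^ p.2
          * (B₁ * B₂) := by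
    intro p
    have e1 : ∀ u : ℝ, ‖G p u‖
        = ‖cpoch α (p.1 + p.2) / ((p.1.factorial : ℂ) * (p.2.factorial : ℂ))
            * z₁ ^ p.1 * z₂ ^ p.2 * Complex.betaIntegral (β₁ + p.1) (γ₁ - β₁)‖
          * ‖(u:ℂ) ^ (β₂ + p.2 - 1) * ((1:ℂ) - u) ^ (γ₂ - β₂ - 1)‖ := by
      intro u
      rw [hGdef]
      simp only
      rw [norm_mul]
    calc (∫ u in Set.Ioo (0:ℝ) 1, ‖G p u‖)
        = ‖cpoch α (p.1 + p.2) / ((p.1.factorial : ℂ) * (p.2.factorial : ℂ))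
            * z₁ ^ p.1 * z₂ ^ p.2 * Complex.betaIntegral (β₁ + p.1) (γ₁ - β₁)‖
          * ∫ u in Set.Ioo (0:ℝ) 1, ‖(u:ℂ) ^ (β₂ + p.2 - 1) * ((1:ℂ) - u) ^ (γ₂ - β₂ - 1)‖ := by
          rw [← integral_const_mul]
          exact setIntegral_congr_fun measurableSet_Ioo (fun u _ => e1 u)
    _ ≤ ‖cpoch α (p.1 + p.2) / ((p.1.factorial : ℂ) * (p.2.factorial : ℂ))
            * z₁ ^ p.1 * z₂ ^ p.2 * Complex.betaIntegral (β₁ + p.1) (γ₁ - β₁)‖ * B₂ := by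
          apply mul_le_mul_of_nonneg_left _ (norm_nonneg _)
          rw [hB₂def]
          apply setIntegral_mono_on
          · exact (betaIntegrand_integrableOn (re_add_nat_pos hβ₂ p.2) hcb₂).norm
          · exact (betaIntegrand_integrableOn hβ₂ hcb₂).norm
          · exact measurableSet_Ioo
          · intro u hu
            exact norm_betaIntegrand_le hβ₂ (γ₂ - β₂) p.2 hu
    _ ≤ ‖cpoch α (p.1 + p.2)‖ / (p.1.factorial * p.2.factorial) * ‖z₁‖ ^ p.1 * ‖z₂‖ ^ p.2
          * (B₁ * B₂) := by
          rw [norm_mul, dterm_norm]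
          have h3 := norm_betaIntegral_shift_le hβ₁ hcb₁ p.1
          rw [← hB₁def] at h3
          have hd : (0:ℝ) ≤ ‖cpoch α (p.1 + p.2)‖ / (p.1.factorial * p.2.factorial)
              * ‖z₁‖ ^ p.1 * ‖z₂‖ ^ p.2 := by positivity
          calc ‖cpoch α (p.1 + p.2)‖ / (p.1.factorial * p.2.factorial)
                * ‖z₁‖ ^ p.1 * ‖z₂‖ ^ p.2 * ‖Complex.betaIntegral (β₁ + p.1) (γ₁ - β₁)‖ * B₂
              ≤ ‖cpoch α (p.1 + p.2)‖ / (p.1.factorial * p.2.factorial)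
                * ‖z₁‖ ^ p.1 * ‖z₂‖ ^ p.2 * B₁ * B₂ := by
                apply mul_le_mul_of_nonneg_right _ hB₂0
                exact mul_le_mul_of_nonneg_left h3 hd
          _ = ‖cpoch α (p.1 + p.2)‖ / (p.1.factorial * p.2.factorial)
                * ‖z₁‖ ^ p.1 * ‖z₂‖ ^ p.2 * (B₁ * B₂) := by ring
  have hsum : Summable (fun p : ℕ × ℕ => ∫ u in Set.Ioo (0:ℝ) 1, ‖G p u‖) := by
    apply Summable.of_nonneg_of_le
      (fun p => integral_nonneg (fun x => norm_nonneg _)) hbound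
    exact (summable_double_norm α (norm_nonneg z₁) (norm_nonneg z₂) hz').mul_right (B₁ * B₂)
  rw [← MeasureTheory.integral_tsum_of_summable_integral_norm hint hsum]
  -- step 4 : evaluate each integral and match terms
  have hGval : ∀ p : ℕ × ℕ, (∫ u in Set.Ioo (0:ℝ) 1, G p u)
      = cpoch α (p.1 + p.2) / ((p.1.factorial : ℂ) * (p.2.factorial : ℂ)) * z₁ ^ p.1 * z₂ ^ p.2
          * Complex.betaIntegral (β₁ + p.1) (γ₁ - β₁)
          * Complex.betaIntegral (β₂ + p.2) (γ₂ - β₂) := by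
    intro p
    rw [hGdef]
    simp only
    rw [integral_const_mul, setIntegral_Ioo_beta]
  rw [tsum_congr hGval]
  -- final termwise identity
  rw [appellF2, ← tsum_mul_left]
  apply tsum_congr
  intro p
  rw [betaIntegral_shift hβ₁ hcb₁ p.1, betaIntegral_shift hβ₂ hcb₂ p.2]
  have hGβ₁ := Complex.Gamma_ne_zero_of_re_pos hβ₁
  have hGβ₂ := Complex.Gamma_ne_zero_of_re_pos hβ₂
  have hGγ₁ := Complex.Gamma_ne_zero_of_re_pos hγ₁'
  have hGγ₂ := Complex.Gamma_ne_zero_of_re_pos hγ₂'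
  have hGcb₁ := Complex.Gamma_ne_zero_of_re_pos hcb₁
  have hGcb₂ := Complex.Gamma_ne_zero_of_re_pos hcb₂
  have hp₁ := cpoch_ne_zero hγ₁' p.1
  have hp₂ := cpoch_ne_zero hγ₂' p.2
  have hf₁ : ((p.1.factorial : ℕ) : ℂ) ≠ 0 := by exact_mod_cast p.1.factorial_ne_zero
  have hf₂ : ((p.2.factorial : ℕ) : ℂ) ≠ 0 := by exact_mod_cast p.2.factorial_ne_zero
  have hK1 : Complex.Gamma γ₁ * Complex.Gamma γ₂ /
        (Complex.Gamma β₁ * Complex.Gamma β₂ * Complex.Gamma (γ₁ - β₁) * Complex.Gamma (γ₂ - β₂))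
      * (Complex.Gamma β₁ * Complex.Gamma (γ₁ - β₁) / Complex.Gamma γ₁)
      * (Complex.Gamma β₂ * Complex.Gamma (γ₂ - β₂) / Complex.Gamma γ₂) = 1 := by
    field_simp
  linear_combination (-(cpoch α (p.1 + p.2) * cpoch β₁ p.1 * cpoch β₂ p.2 /
      (cpoch γ₁ p.1 * cpoch γ₂ p.2 * (p.1.factorial : ℂ) * (p.2.factorial : ℂ)) *
      z₁ ^ p.1 * z₂ ^ p.2)) * hK1
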